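/- Let P be a (second countable) Hilbert C_0(Y)-module and E_P its associated Hilbert bundle. Then the map p ↦ p̂, where p̂(y) = p + I_yP, is a unitary C_0(Y)-module isomorphism from P onto C_0(Y,E_P); in particular every continuous section of E_P vanishing at infinity is of the form p̂ for a unique p ∈ P, and ⟨p̂,q̂⟩ = ⟨p,q⟩. -/

import Mathlib

noncomputable section
open scoped ZeroAtInfty
open Topology Filter ComplexConjugate

namespace Stabilization

/-- The set of continuous sections vanishing at infinity of a family of normed fibers,
relative to a given topology on the total space of the bundle. -/
def C0Sections {Y : Type} [TopologicalSpace Y] (H : Y → Type)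
    [∀ y, NormedAddCommGroup (H y)] (tE : TopologicalSpace ((y : Y) × H y)) :
    Set ((y : Y) → H y) :=
  {F | @Continuous Y ((y : Y) × H y) _ tE (fun y => ⟨y, F y⟩) ∧
    Tendsto (fun y => ‖F y‖) (cocompact Y) (nhds 0)}

/-- A Hilbert bundle over `Y` (Definition 2.1 of the paper): a family of Hilbert spaces
`H y` together with a second countable topology on the total space such that
(i) fiberwise addition and scalar multiplication are continuous, (ii) the norm along any
continuous section vanishing at infinity is continuous, (iii) the continuous sections
vanishing at infinity fill out every fiber, and (iv) the sets `U_{F,ε}` form a base. -/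
structure HilbertBundle (Y : Type) [TopologicalSpace Y] where
  H : Y → Type
  [nacg : ∀ y, NormedAddCommGroup (H y)]
  [ips : ∀ y, InnerProductSpace ℂ (H y)]
  [cpl : ∀ y, CompleteSpace (H y)]
  topE : TopologicalSpace ((y : Y) × H y)
  secondCountable : @SecondCountableTopology ((y : Y) × H y) topE
  add_cont : @Continuous {p : ((y : Y) × H y) × ((y : Y) × H y) // p.1.1 = p.2.1}
      ((y : Y) × H y)
      (@instTopologicalSpaceSubtype _ _ (@instTopologicalSpaceProd _ _ topE topE)) topE
      (fun p => ⟨p.1.1.1, p.1.1.2 + cast (congrArg H p.2).symm p.1.2.2⟩)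
  smul_cont : @Continuous (ℂ × (y : Y) × H y) ((y : Y) × H y)
      (@instTopologicalSpaceProd _ _ _ topE) topE
      (fun p => ⟨p.2.1, p.1 • p.2.2⟩)
  norm_cont : ∀ F ∈ C0Sections H topE, Continuous fun y => ‖F y‖
  fiber_full : ∀ (y : Y) (v : H y), ∃ F ∈ C0Sections H topE, F y = v
  isBasis : @TopologicalSpace.IsTopologicalBasis ((y : Y) × H y) topE
      {S | ∃ (U : Set Y) (F : (y : Y) → H y) (ε : ℝ), IsOpen U ∧ F ∈ C0Sections H topE ∧
        0 < ε ∧ S = {e | e.1 ∈ U ∧ ‖e.2 - F e.1‖ < ε}}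

attribute [instance] HilbertBundle.nacg HilbertBundle.ips HilbertBundle.cpl

/-- A Hilbert `C₀(Y)`-module structure on `P`: a right `C₀(Y)`-module action and a
`C₀(Y)`-valued inner product, complete for the norm `‖p‖ = ‖⟨p,p⟩‖^{1/2}` (completeness
being recorded by a `CompleteSpace` instance on `P` at use sites). -/
class HilbertCzeroModule (Y : Type) [TopologicalSpace Y] (P : Type)
    [NormedAddCommGroup P] [NormedSpace ℂ P] where
  msmul : P → C₀(Y, ℂ) → P
  minner : P → P → C₀(Y, ℂ)
  msmul_add_left : ∀ (p q : P) (f : C₀(Y, ℂ)), msmul (p + q) f = msmul p f + msmul q f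
  msmul_add_right : ∀ (p : P) (f g : C₀(Y, ℂ)), msmul p (f + g) = msmul p f + msmul p g
  msmul_mul : ∀ (p : P) (f g : C₀(Y, ℂ)), msmul (msmul p f) g = msmul p (f * g)
  msmul_csmul_left : ∀ (c : ℂ) (p : P) (f : C₀(Y, ℂ)), msmul (c • p) f = c • msmul p f
  msmul_csmul_right : ∀ (c : ℂ) (p : P) (f : C₀(Y, ℂ)), msmul p (c • f) = c • msmul p f
  minner_add_right : ∀ p q r : P, minner p (q + r) = minner p q + minner p r
  minner_conj : ∀ p q : P, minner p q = star (minner q p)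
  minner_csmul_right : ∀ (c : ℂ) (p q : P), minner p (c • q) = c • minner p q
  minner_msmul_right : ∀ (p q : P) (f : C₀(Y, ℂ)), minner p (msmul q f) = minner p q * f
  minner_self_re_nonneg : ∀ (p : P) (y : Y), 0 ≤ (minner p p y).re
  minner_self_im : ∀ (p : P) (y : Y), (minner p p y).im = 0
  norm_eq : ∀ p : P, ‖p‖ = Real.sqrt ‖minner p p‖

/-- The module action, with the base space explicit. -/
def modSMul (Y : Type) [TopologicalSpace Y] {P : Type} [NormedAddCommGroup P]
    [NormedSpace ℂ P] [HilbertCzeroModule Y P] (p : P) (f : C₀(Y, ℂ)) : P :=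
  HilbertCzeroModule.msmul p f

/-- The `C₀(Y)`-valued inner product, with the base space explicit. -/
def modIP (Y : Type) [TopologicalSpace Y] {P : Type} [NormedAddCommGroup P]
    [NormedSpace ℂ P] [HilbertCzeroModule Y P] (p q : P) : C₀(Y, ℂ) :=
  HilbertCzeroModule.minner p q

variable (Y : Type) [TopologicalSpace Y]
variable (P : Type) [NormedAddCommGroup P] [NormedSpace ℂ P] [HilbertCzeroModule Y P]

/-- `I_y P`: the closed submodule generated by products `p·f` with `f(y) = 0`. -/
def fiberIdeal (y : Y) : Submodule ℂ P :=
  Submodule.span ℂ {x | ∃ (f : C₀(Y, ℂ)) (p : P), f y = 0 ∧ x = modSMul Y p f}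

/-- The fiber `P_y = P / I_y P` of the Hilbert bundle associated to `P`. -/
abbrev Fib (y : Y) : Type := P ⧸ fiberIdeal Y P y

/-- `p ↦ p̂(y)`, the image of `p` in the fiber `P_y`. -/
def fibMk (y : Y) : P → Fib Y P y := Submodule.Quotient.mk

/-- The fiber norm of `p̂(y)`, computed from a representative. -/
def fibNormRep (y : Y) (p : P) : ℝ := Real.sqrt ((modIP Y p p) y).re

/-- The norm on the fiber `P_y` (the common value of `fibNormRep` over representatives). -/
def fibNormQ (y : Y) (h : Fib Y P y) : ℝ :=
  sInf {r | ∃ p : P, h = fibMk Y P y p ∧ r = fibNormRep Y P y p}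

/-- The total space `E_P = ⊔_y P_y` of the bundle associated to `P`. -/
abbrev TotalP : Type := (y : Y) × Fib Y P y

/-- The basic sets `U_{p,ε}` of the bundle `E_P`. -/
def basisP : Set (Set (TotalP Y P)) :=
  {S | ∃ (U : Set Y) (p : P) (ε : ℝ), IsOpen U ∧ 0 < ε ∧
    S = {e : TotalP Y P | e.1 ∈ U ∧ fibNormQ Y P e.1 (e.2 - fibMk Y P e.1 p) < ε}}

/-- The topology on `E_P` generated by the sets `U_{p,ε}`. -/
def topEP : TopologicalSpace (TotalP Y P) := TopologicalSpace.generateFrom (basisP Y P)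

/-- The continuous sections of `E_P` vanishing at infinity. -/
def C0SectionsP : Set ((y : Y) → Fib Y P y) :=
  {F | @Continuous Y (TotalP Y P) _ (topEP Y P) (fun y => ⟨y, F y⟩) ∧
    Tendsto (fun y => fibNormQ Y P y (F y)) (cocompact Y) (nhds 0)}

/-- The section `p̂` associated to `p ∈ P`. -/
def hatSec (p : P) : (y : Y) → Fib Y P y := fun y => fibMk Y P y p

/-- Transport between fibers of `E_P` over equal base points. -/
def fcast {y z : Y} (h : y = z) : Fib Y P y → Fib Y P z := fun v => h ▸ v


variable (Y : Type) [TopologicalSpace Y]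

/-- A second countable locally compact Hausdorff proper topological groupoid with unit
space `Y`.  Multiplication is recorded as a total map which is only constrained on
composable pairs. -/
structure LCGroupoid where
  G : Type
  [topG : TopologicalSpace G]
  [t2G : T2Space G]
  [lcG : LocallyCompactSpace G]
  [scG : SecondCountableTopology G]
  [mG : MeasurableSpace G]
  [bG : BorelSpace G]
  r : G → Y
  s : G → Y
  unit : Y → G
  mul : G → G → G
  inv : G → G
  unit_embedding : Topology.IsEmbedding unit
  r_unit : ∀ y, r (unit y) = y
  s_unit : ∀ y, s (unit y) = y
  r_cont : Continuous r
  s_cont : Continuous s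
  inv_cont : Continuous inv
  mul_cont : Continuous fun p : {p : G × G // s p.1 = r p.2} => mul p.1.1 p.1.2
  r_mul : ∀ g h, s g = r h → r (mul g h) = r g
  s_mul : ∀ g h, s g = r h → s (mul g h) = s h
  mul_assoc : ∀ g h k, s g = r h → s h = r k → mul (mul g h) k = mul g (mul h k)
  mul_unit : ∀ g, mul g (unit (s g)) = g
  unit_mul : ∀ g, mul (unit (r g)) g = g
  r_inv : ∀ g, r (inv g) = s g
  s_inv : ∀ g, s (inv g) = r g
  mul_inv : ∀ g, mul g (inv g) = unit (r g)
  inv_mul : ∀ g, mul (inv g) g = unit (s g)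
  proper : IsProperMap fun g => (r g, s g)

attribute [instance] LCGroupoid.topG LCGroupoid.t2G LCGroupoid.lcG LCGroupoid.scG
  LCGroupoid.mG LCGroupoid.bG

variable (Gp : LCGroupoid Y)

/-- A left Haar system `{λ^y}` for the groupoid `Gp`:  `λ^y` is a Radon-type measure
concentrated on `G^y = r⁻¹(y)` with support `G^y`, varying continuously, and
left invariant. -/
structure HaarSystem where
  lam : Y → MeasureTheory.Measure Gp.G
  concentrated : ∀ y, lam y ((Gp.r ⁻¹' {y})ᶜ) = 0
  full : ∀ (y : Y) (U : Set Gp.G), IsOpen U → (U ∩ Gp.r ⁻¹' {y}).Nonempty → lam y U ≠ 0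
  finiteOnCompacts : ∀ (y : Y) (K : Set Gp.G), IsCompact K → lam y K ≠ ⊤
  integral_continuous : ∀ F : Gp.G → ℂ, Continuous F → HasCompactSupport F →
    Continuous fun y => ∫ g, F g ∂(lam y)
  left_invariant : ∀ (g₀ : Gp.G) (F : Gp.G → ℂ), Continuous F → HasCompactSupport F →
    ∫ g, F (Gp.mul g₀ g) ∂(lam (Gp.s g₀)) = ∫ g, F g ∂(lam (Gp.r g₀))

/-- Continuous compactly supported functions on the groupoid `Gp`. -/
def CcFun : Type := {F : Gp.G → ℂ // Continuous F ∧ HasCompactSupport F}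


section GroupoidActions

variable {Y : Type} [TopologicalSpace Y] (Gp : LCGroupoid Y)
variable (P : Type) [NormedAddCommGroup P] [NormedSpace ℂ P] [HilbertCzeroModule Y P]

/-- A continuous, unitary left action of the groupoid `Gp` on the Hilbert bundle `E_P`
associated to the Hilbert `C₀(Y)`-module `P`: this is the datum making `P` a
`G`-Hilbert module. -/
structure GAction where
  act : (g : Gp.G) → Fib Y P (Gp.s g) → Fib Y P (Gp.r g)
  act_add : ∀ (g : Gp.G) (v w : Fib Y P (Gp.s g)), act g (v + w) = act g v + act g w
  act_csmul : ∀ (g : Gp.G) (c : ℂ) (v : Fib Y P (Gp.s g)), act g (c • v) = c • act g v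
  act_norm : ∀ (g : Gp.G) (v : Fib Y P (Gp.s g)),
    fibNormQ Y P (Gp.r g) (act g v) = fibNormQ Y P (Gp.s g) v
  act_surjective : ∀ g : Gp.G, Function.Surjective (act g)
  act_unit : ∀ (y : Y) (v : Fib Y P y),
    act (Gp.unit y) (fcast Y P (Gp.s_unit y).symm v) = fcast Y P (Gp.r_unit y).symm v
  act_mul : ∀ (g h : Gp.G) (hc : Gp.s g = Gp.r h) (v : Fib Y P (Gp.s h)),
    act (Gp.mul g h) (fcast Y P (Gp.s_mul g h hc).symm v) =
      fcast Y P (Gp.r_mul g h hc).symm (act g (fcast Y P hc.symm (act h v)))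
  act_cont : @Continuous {q : Gp.G × TotalP Y P // Gp.s q.1 = q.2.1} (TotalP Y P)
    (@instTopologicalSpaceSubtype _ _ (@instTopologicalSpaceProd _ _ _ (topEP Y P)))
    (topEP Y P)
    (fun q => ⟨Gp.r q.1.1, act q.1.1 (fcast Y P q.2.symm q.1.2.2)⟩)

variable {Gp P}
variable {Q : Type} [NormedAddCommGroup Q] [NormedSpace ℂ Q] [HilbertCzeroModule Y Q]

/-- A `G`-equivariant unitary isomorphism of `G`-Hilbert modules:  a bijective,
`ℂ`-linear, `C₀(Y)`-linear, inner-product preserving map intertwining the `G`-actions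
on the associated Hilbert bundles. -/
def IsGEquivariantUnitary (T : P → Q) (AP : GAction Gp P) (AQ : GAction Gp Q) : Prop :=
  Function.Bijective T ∧
  (∀ p p' : P, T (p + p') = T p + T p') ∧
  (∀ (c : ℂ) (p : P), T (c • p) = c • T p) ∧
  (∀ (p : P) (f : C₀(Y, ℂ)), T (modSMul Y p f) = modSMul Y (T p) f) ∧
  (∀ p p' : P, modIP Y (T p) (T p') = modIP Y p p') ∧
  (∀ (g : Gp.G) (p p' : P),
      AP.act g (fibMk Y P (Gp.s g) p) = fibMk Y P (Gp.r g) p' →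
      AQ.act g (fibMk Y Q (Gp.s g) (T p)) = fibMk Y Q (Gp.r g) (T p'))

/-- Equivalence of `G`-Hilbert modules: existence of a `G`-equivariant unitary. -/
def GEquiv (AP : GAction Gp P) (AQ : GAction Gp Q) : Prop :=
  ∃ T : P → Q, IsGEquivariantUnitary T AP AQ

end GroupoidActions

section ModuleConstructions

variable {Y : Type} [TopologicalSpace Y] (Gp : LCGroupoid Y)

/-- Data exhibiting a Hilbert `C₀(Y)`-module `PG` as the completion `P_G` of the
pre-Hilbert `C₀(Y)`-module `C_c(G)`, with module action `F·f = F·(f∘r)` and inner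
product `⟨F₁,F₂⟩(y) = ∫_{G^y} conj F₁ · F₂ dλ^y`. -/
structure PGData (hs : HaarSystem Y Gp) (PG : Type) [NormedAddCommGroup PG]
    [NormedSpace ℂ PG] [HilbertCzeroModule Y PG] where
  emb : CcFun Y Gp → PG
  emb_add : ∀ F₁ F₂ F₃ : CcFun Y Gp, F₃.1 = F₁.1 + F₂.1 → emb F₃ = emb F₁ + emb F₂
  emb_csmul : ∀ (c : ℂ) (F₁ F₃ : CcFun Y Gp), F₃.1 = c • F₁.1 → emb F₃ = c • emb F₁
  emb_msmul : ∀ (F₁ F₃ : CcFun Y Gp) (f : C₀(Y, ℂ)),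
    F₃.1 = (fun g => F₁.1 g * f (Gp.r g)) → emb F₃ = modSMul Y (emb F₁) f
  emb_inner : ∀ (F₁ F₂ : CcFun Y Gp) (y : Y),
    modIP Y (emb F₁) (emb F₂) y = ∫ g, conj (F₁.1 g) * F₂.1 g ∂(hs.lam y)
  emb_dense : ∀ (p : PG) (ε : ℝ), 0 < ε → ∃ F : CcFun Y Gp, ‖p - emb F‖ < ε

variable {Gp}

/-- The natural left translation action of `G` on `L²(G) = E_{P_G}`, characterized on
the dense image of `C_c(G)` by `(g·ξ)(h) = ξ(g⁻¹h)` for `h ∈ G^{r(g)}`. -/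
def IsNaturalPGAction {hs : HaarSystem Y Gp} {PG : Type} [NormedAddCommGroup PG]
    [NormedSpace ℂ PG] [HilbertCzeroModule Y PG] (d : PGData Gp hs PG)
    (A : GAction Gp PG) : Prop :=
  ∀ (g : Gp.G) (F F' : CcFun Y Gp),
    (∀ h : Gp.G, Gp.r h = Gp.r g → F'.1 h = F.1 (Gp.mul (Gp.inv g) h)) →
    A.act g (fibMk Y PG (Gp.s g) (d.emb F)) = fibMk Y PG (Gp.r g) (d.emb F')

end ModuleConstructions

section TensorSum

/-- Data exhibiting `R` as the interior tensor product `P ⊗_{C₀(Y)} Q` of two Hilbert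
`C₀(Y)`-modules: a balanced bilinear map with dense span satisfying
`⟨p₁⊗q₁, p₂⊗q₂⟩ = ⟨p₁,p₂⟩⟨q₁,q₂⟩`. -/
structure TensorData (Y : Type) [TopologicalSpace Y] (P Q R : Type)
    [NormedAddCommGroup P] [NormedSpace ℂ P] [HilbertCzeroModule Y P]
    [NormedAddCommGroup Q] [NormedSpace ℂ Q] [HilbertCzeroModule Y Q]
    [NormedAddCommGroup R] [NormedSpace ℂ R] [HilbertCzeroModule Y R] where
  t : P → Q → R
  t_add_left : ∀ (p p' : P) (q : Q), t (p + p') q = t p q + t p' q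
  t_add_right : ∀ (p : P) (q q' : Q), t p (q + q') = t p q + t p q'
  t_csmul_left : ∀ (c : ℂ) (p : P) (q : Q), t (c • p) q = c • t p q
  t_csmul_right : ∀ (c : ℂ) (p : P) (q : Q), t p (c • q) = c • t p q
  t_msmul_left : ∀ (p : P) (q : Q) (f : C₀(Y, ℂ)), t (modSMul Y p f) q = modSMul Y (t p q) f
  t_msmul_right : ∀ (p : P) (q : Q) (f : C₀(Y, ℂ)), t p (modSMul Y q f) = modSMul Y (t p q) f
  t_inner : ∀ (p p' : P) (q q' : Q),
    modIP Y (t p q) (t p' q') = modIP Y p p' * modIP Y q q'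
  t_dense : ∀ (x : R) (ε : ℝ), 0 < ε →
    ∃ (n : ℕ) (ps : Fin n → P) (qs : Fin n → Q), ‖x - ∑ i, t (ps i) (qs i)‖ < ε

/-- Data exhibiting `S` as the Hilbert `C₀(Y)`-module direct sum `P ⊕ Q`. -/
structure SumData (Y : Type) [TopologicalSpace Y] (P Q S : Type)
    [NormedAddCommGroup P] [NormedSpace ℂ P] [HilbertCzeroModule Y P]
    [NormedAddCommGroup Q] [NormedSpace ℂ Q] [HilbertCzeroModule Y Q]
    [NormedAddCommGroup S] [NormedSpace ℂ S] [HilbertCzeroModule Y S] where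
  inl : P → S
  inr : Q → S
  inl_add : ∀ p p' : P, inl (p + p') = inl p + inl p'
  inr_add : ∀ q q' : Q, inr (q + q') = inr q + inr q'
  inl_csmul : ∀ (c : ℂ) (p : P), inl (c • p) = c • inl p
  inr_csmul : ∀ (c : ℂ) (q : Q), inr (c • q) = c • inr q
  inl_msmul : ∀ (p : P) (f : C₀(Y, ℂ)), inl (modSMul Y p f) = modSMul Y (inl p) f
  inr_msmul : ∀ (q : Q) (f : C₀(Y, ℂ)), inr (modSMul Y q f) = modSMul Y (inr q) f
  inner_ll : ∀ p p' : P, modIP Y (inl p) (inl p') = modIP Y p p'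
  inner_rr : ∀ q q' : Q, modIP Y (inr q) (inr q') = modIP Y q q'
  inner_lr : ∀ (p : P) (q : Q), modIP Y (inl p) (inr q) = 0
  total : ∀ x : S, ∃ (p : P) (q : Q), x = inl p + inr q

/-- Data exhibiting `S` as the Hilbert `C₀(Y)`-module direct sum `⊕_{i=1}^∞ P i` of a
sequence of Hilbert `C₀(Y)`-modules: the module of sequences `{p_i}`, `p_i ∈ P i`, with
`Σ_i ⟨p_i,p_i⟩` convergent in `C₀(Y)`. -/
structure InftySumData (Y : Type) [TopologicalSpace Y] (Pf : ℕ → Type) (S : Type)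
    [∀ i, NormedAddCommGroup (Pf i)] [∀ i, NormedSpace ℂ (Pf i)]
    [∀ i, HilbertCzeroModule Y (Pf i)]
    [NormedAddCommGroup S] [NormedSpace ℂ S] [HilbertCzeroModule Y S] where
  proj : (i : ℕ) → S → Pf i
  proj_add : ∀ (i : ℕ) (x x' : S), proj i (x + x') = proj i x + proj i x'
  proj_csmul : ∀ (i : ℕ) (c : ℂ) (x : S), proj i (c • x) = c • proj i x
  proj_msmul : ∀ (i : ℕ) (x : S) (f : C₀(Y, ℂ)),
    proj i (modSMul Y x f) = modSMul Y (proj i x) f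
  proj_inner : ∀ x x' : S, HasSum (fun i => modIP Y (proj i x) (proj i x')) (modIP Y x x')
  proj_injective : ∀ x x' : S, (∀ i, proj i x = proj i x') → x = x'
  proj_surjective : ∀ u : (i : ℕ) → Pf i, Summable (fun i => modIP Y (u i) (u i)) →
    ∃ x : S, ∀ i, proj i x = u i

variable {Y : Type} [TopologicalSpace Y] {Gp : LCGroupoid Y}
variable {P Q R S : Type}
  [NormedAddCommGroup P] [NormedSpace ℂ P] [HilbertCzeroModule Y P]
  [NormedAddCommGroup Q] [NormedSpace ℂ Q] [HilbertCzeroModule Y Q]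
  [NormedAddCommGroup R] [NormedSpace ℂ R] [HilbertCzeroModule Y R]
  [NormedAddCommGroup S] [NormedSpace ℂ S] [HilbertCzeroModule Y S]

/-- The diagonal `G`-action on a tensor product `P ⊗_{C₀(Y)} Q`. -/
def IsDiagonalAction (td : TensorData Y P Q R) (AP : GAction Gp P) (AQ : GAction Gp Q)
    (AR : GAction Gp R) : Prop :=
  ∀ (g : Gp.G) (p p' : P) (q q' : Q),
    AP.act g (fibMk Y P (Gp.s g) p) = fibMk Y P (Gp.r g) p' →
    AQ.act g (fibMk Y Q (Gp.s g) q) = fibMk Y Q (Gp.r g) q' →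
    AR.act g (fibMk Y R (Gp.s g) (td.t p q)) = fibMk Y R (Gp.r g) (td.t p' q')

/-- The coordinatewise `G`-action on a direct sum `P ⊕ Q`. -/
def IsCoordinateSumAction (sd : SumData Y P Q S) (AP : GAction Gp P) (AQ : GAction Gp Q)
    (AS : GAction Gp S) : Prop :=
  (∀ (g : Gp.G) (p p' : P),
    AP.act g (fibMk Y P (Gp.s g) p) = fibMk Y P (Gp.r g) p' →
    AS.act g (fibMk Y S (Gp.s g) (sd.inl p)) = fibMk Y S (Gp.r g) (sd.inl p')) ∧
  (∀ (g : Gp.G) (q q' : Q),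
    AQ.act g (fibMk Y Q (Gp.s g) q) = fibMk Y Q (Gp.r g) q' →
    AS.act g (fibMk Y S (Gp.s g) (sd.inr q)) = fibMk Y S (Gp.r g) (sd.inr q'))

/-- The coordinatewise `G`-action on an infinite direct sum `⊕_{i=1}^∞ P i`. -/
def IsCoordinateInftyAction {Pf : ℕ → Type} [∀ i, NormedAddCommGroup (Pf i)]
    [∀ i, NormedSpace ℂ (Pf i)] [∀ i, HilbertCzeroModule Y (Pf i)]
    (d : InftySumData Y Pf S) (Af : (i : ℕ) → GAction Gp (Pf i))
    (AS : GAction Gp S) : Prop :=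
  ∀ (g : Gp.G) (x x' : S),
    AS.act g (fibMk Y S (Gp.s g) x) = fibMk Y S (Gp.r g) x' →
    ∀ i, (Af i).act g (fibMk Y (Pf i) (Gp.s g) (d.proj i x)) =
      fibMk Y (Pf i) (Gp.r g) (d.proj i x')

end TensorSum


section HatAux

open ZeroAtInftyContinuousMap HilbertCzeroModule

variable {Y : Type} [TopologicalSpace Y]
variable {P : Type} [NormedAddCommGroup P] [NormedSpace ℂ P] [HilbertCzeroModule Y P]

/-! ### Basic algebraic identities for the module inner product -/

lemma ip_conj (p q : P) : modIP Y p q = star (modIP Y q p) :=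
  minner_conj p q

lemma ip_add_right (p q r : P) : modIP Y p (q + r) = modIP Y p q + modIP Y p r :=
  minner_add_right p q r

lemma ip_csmul_right (c : ℂ) (p q : P) : modIP Y p (c • q) = c • modIP Y p q :=
  minner_csmul_right c p q

lemma ip_msmul_right (p q : P) (f : C₀(Y, ℂ)) :
    modIP Y p (modSMul Y q f) = modIP Y p q * f :=
  minner_msmul_right p q f

lemma ip_add_left (p q r : P) : modIP Y (p + q) r = modIP Y p r + modIP Y q r := by
  rw [ip_conj (p + q) r, ip_add_right, star_add, ← ip_conj, ← ip_conj]

lemma ip_csmul_left (c : ℂ) (p q : P) : modIP Y (c • p) q = star c • modIP Y p q := by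
  rw [ip_conj (c • p) q, ip_csmul_right, star_smul, ← ip_conj]

lemma ip_msmul_left (p q : P) (f : C₀(Y, ℂ)) :
    modIP Y (modSMul Y p f) q = star f * modIP Y p q := by
  rw [ip_conj (modSMul Y p f) q, ip_msmul_right, star_mul', ← ip_conj]
  exact mul_comm _ _

lemma ip_self_re_nonneg (p : P) (y : Y) : 0 ≤ (modIP Y p p y).re :=
  minner_self_re_nonneg (Y := Y) p y

lemma ip_self_im (p : P) (y : Y) : (modIP Y p p y).im = 0 :=
  minner_self_im (Y := Y) p y

lemma norm_eq_ip (p : P) : ‖p‖ = Real.sqrt ‖modIP Y p p‖ :=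
  HilbertCzeroModule.norm_eq p

lemma ip_zero_right (p : P) : modIP Y p 0 = 0 := by
  have h := ip_add_right (Y := Y) p 0 0
  rw [add_zero] at h
  exact (add_left_cancel (a := modIP Y p (0 : P)) (by rw [add_zero, ← h])).symm

lemma ip_zero_left (p : P) : modIP Y (0 : P) p = 0 := by
  rw [ip_conj, ip_zero_right, star_zero]

lemma ip_neg_right (p q : P) : modIP Y p (-q) = -modIP Y p q := by
  have h : modIP Y p (-q) + modIP Y p q = 0 := by
    rw [← ip_add_right]
    have h2 : -q + q = (0 : P) := by abel
    rw [h2, ip_zero_right]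
  exact eq_neg_of_add_eq_zero_left h

lemma ip_neg_left (p q : P) : modIP Y (-p) q = -modIP Y p q := by
  rw [ip_conj (-p) q, ip_neg_right, star_neg, ← ip_conj]

lemma ip_sub_right (p q r : P) : modIP Y p (q - r) = modIP Y p q - modIP Y p r := by
  rw [sub_eq_add_neg, ip_add_right, ip_neg_right, sub_eq_add_neg]

lemma ip_sub_left (p q r : P) : modIP Y (p - q) r = modIP Y p r - modIP Y q r := by
  rw [sub_eq_add_neg, ip_add_left, ip_neg_left, sub_eq_add_neg]

lemma sm_add_right (p : P) (f g : C₀(Y, ℂ)) :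
    modSMul Y p (f + g) = modSMul Y p f + modSMul Y p g :=
  msmul_add_right p f g

lemma sm_add_left (p q : P) (f : C₀(Y, ℂ)) :
    modSMul Y (p + q) f = modSMul Y p f + modSMul Y q f :=
  msmul_add_left p q f

lemma sm_zero_right (p : P) : modSMul Y p (0 : C₀(Y, ℂ)) = 0 := by
  have h := sm_add_right (Y := Y) p 0 0
  rw [add_zero] at h
  exact (add_left_cancel (a := modSMul Y p (0 : C₀(Y, ℂ))) (by rw [add_zero, ← h])).symm

lemma sm_neg_right (p : P) (f : C₀(Y, ℂ)) : modSMul Y p (-f) = -modSMul Y p f := by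
  have h : modSMul Y p (-f) + modSMul Y p f = 0 := by
    rw [← sm_add_right]
    have h2 : -f + f = (0 : C₀(Y, ℂ)) := by abel
    rw [h2, sm_zero_right]
  exact eq_neg_of_add_eq_zero_left h

lemma sm_zero_left (f : C₀(Y, ℂ)) : modSMul Y (0 : P) f = 0 := by
  have h := sm_add_left (Y := Y) (0 : P) 0 f
  rw [add_zero] at h
  exact (add_left_cancel (a := modSMul Y (0 : P) f) (by rw [add_zero, ← h])).symm

lemma sm_neg_left (p : P) (f : C₀(Y, ℂ)) : modSMul Y (-p) f = -modSMul Y p f := by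
  have h : modSMul Y (-p) f + modSMul Y p f = 0 := by
    rw [← sm_add_left]
    have h2 : -p + p = (0 : P) := by abel
    rw [h2, sm_zero_left]
  exact eq_neg_of_add_eq_zero_left h

lemma sm_sub_right (p : P) (f g : C₀(Y, ℂ)) :
    modSMul Y p (f - g) = modSMul Y p f - modSMul Y p g := by
  rw [sub_eq_add_neg, sm_add_right, sm_neg_right, sub_eq_add_neg]

lemma sm_sub_left (p q : P) (f : C₀(Y, ℂ)) :
    modSMul Y (p - q) f = modSMul Y p f - modSMul Y q f := by
  rw [sub_eq_add_neg, sm_add_left, sm_neg_left, sub_eq_add_neg]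

lemma sm_mul (p : P) (f g : C₀(Y, ℂ)) :
    modSMul Y (modSMul Y p f) g = modSMul Y p (f * g) :=
  msmul_mul p f g

/-! ### Pointwise facts -/

lemma norm_ip_self_apply (p : P) (y : Y) : ‖modIP Y p p y‖ = (modIP Y p p y).re := by
  have him : (modIP Y p p y).im = 0 := ip_self_im p y
  have hre : 0 ≤ (modIP Y p p y).re := ip_self_re_nonneg p y
  rw [Complex.norm_def, Complex.normSq_apply, him, mul_zero, add_zero,
    Real.sqrt_mul_self hre]

lemma ip_self_eq_zero_of_re {p : P} {y : Y} (h : (modIP Y p p y).re = 0) :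
    modIP Y p p y = 0 :=
  Complex.ext (by rw [h, Complex.zero_re]) (by rw [Complex.zero_im]; exact ip_self_im p y)

lemma cz_apply_norm_le (f : C₀(Y, ℂ)) (y : Y) : ‖f y‖ ≤ ‖f‖ := by
  calc ‖f y‖ = ‖f.toBCF y‖ := rfl
  _ ≤ ‖f.toBCF‖ := BoundedContinuousFunction.norm_coe_le_norm _ y
  _ = ‖f‖ := norm_toBCF_eq_norm

lemma cz_norm_le {f : C₀(Y, ℂ)} {c : ℝ} (hc : 0 ≤ c) (h : ∀ y, ‖f y‖ ≤ c) : ‖f‖ ≤ c := by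
  rw [← norm_toBCF_eq_norm]
  exact (BoundedContinuousFunction.norm_le hc).mpr h

lemma norm_sq_eq (p : P) : ‖p‖ ^ 2 = ‖modIP Y p p‖ := by
  rw [norm_eq_ip (Y := Y) p]
  exact Real.sq_sqrt (norm_nonneg _)

lemma norm_le_of_ip_le {x : P} {c : ℝ} (hc : 0 ≤ c) (h : ∀ y, ‖modIP Y x x y‖ ≤ c ^ 2) :
    ‖x‖ ≤ c := by
  rw [norm_eq_ip (Y := Y) x]
  have hn : ‖modIP Y x x‖ ≤ c ^ 2 := cz_norm_le (by positivity) h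
  exact (Real.sqrt_le_sqrt hn).trans_eq (Real.sqrt_sq hc)

lemma rep_nonneg (y : Y) (p : P) : 0 ≤ fibNormRep Y P y p := Real.sqrt_nonneg _

lemma rep_def (y : Y) (p : P) : fibNormRep Y P y p = Real.sqrt ((modIP Y p p y).re) := rfl

lemma rep_le_norm (y : Y) (p : P) : fibNormRep Y P y p ≤ ‖p‖ := by
  rw [rep_def, norm_eq_ip (Y := Y) p]
  apply Real.sqrt_le_sqrt
  calc (modIP Y p p y).re = ‖modIP Y p p y‖ := (norm_ip_self_apply p y).symm
  _ ≤ ‖modIP Y p p‖ := cz_apply_norm_le _ y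

lemma norm_le_of_rep_le {p : P} {c : ℝ} (hc : 0 ≤ c) (h : ∀ y, fibNormRep Y P y p ≤ c) :
    ‖p‖ ≤ c := by
  apply norm_le_of_ip_le (Y := Y) hc
  intro y
  rw [norm_ip_self_apply]
  have h1 : Real.sqrt ((modIP Y p p y).re) ≤ c := h y
  have h2 : 0 ≤ (modIP Y p p y).re := ip_self_re_nonneg p y
  calc (modIP Y p p y).re = Real.sqrt ((modIP Y p p y).re) ^ 2 := (Real.sq_sqrt h2).symm
  _ ≤ c ^ 2 := pow_le_pow_left₀ (Real.sqrt_nonneg _) h1 2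

/-! ### Cauchy–Schwarz -/

def preCore (y : Y) : PreInnerProductSpace.Core ℂ P where
  inner p q := modIP Y p q y
  conj_inner_symm p q := by
    show (starRingEnd ℂ) (modIP Y q p y) = modIP Y p q y
    rw [ip_conj p q, star_apply]
    rfl
  re_inner_nonneg p := by
    show (0 : ℝ) ≤ RCLike.re (modIP Y p p y)
    rw [RCLike.re_to_complex]
    exact ip_self_re_nonneg p y
  add_left x z r := by
    show modIP Y (x + z) r y = modIP Y x r y + modIP Y z r y
    rw [ip_add_left, ZeroAtInftyContinuousMap.add_apply]
  smul_left x z r := by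
    show modIP Y (r • x) z y = (starRingEnd ℂ) r * modIP Y x z y
    rw [ip_csmul_left, ZeroAtInftyContinuousMap.smul_apply, smul_eq_mul]
    rfl

lemma cs_sq (y : Y) (p q : P) :
    ‖modIP Y p q y‖ ^ 2 ≤ (modIP Y p p y).re * (modIP Y q q y).re := by
  letI : PreInnerProductSpace.Core ℂ P := preCore (P := P) y
  have h := InnerProductSpace.Core.inner_mul_inner_self_le (𝕜 := ℂ) (F := P) p q
  have hsymm : ‖modIP Y q p y‖ = ‖modIP Y p q y‖ := by
    rw [ip_conj q p, star_apply, norm_star]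
  calc ‖modIP Y p q y‖ ^ 2 = ‖modIP Y p q y‖ * ‖modIP Y q p y‖ := by rw [hsymm, sq]
  _ ≤ (modIP Y p p y).re * (modIP Y q q y).re := h

lemma ip_self_expand (p q : P) :
    modIP Y (p + q) (p + q)
      = modIP Y p p + modIP Y p q + modIP Y q p + modIP Y q q := by
  rw [ip_add_left, ip_add_right, ip_add_right]
  abel

lemma rep_add_le (y : Y) (p q : P) :
    fibNormRep Y P y (p + q) ≤ fibNormRep Y P y p + fibNormRep Y P y q := by
  have ha : 0 ≤ (modIP Y p p y).re := ip_self_re_nonneg p y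
  have hd : 0 ≤ (modIP Y q q y).re := ip_self_re_nonneg q y
  have hb : (modIP Y p q y).re
      ≤ Real.sqrt ((modIP Y p p y).re) * Real.sqrt ((modIP Y q q y).re) := by
    have h1 : (modIP Y p q y).re ≤ ‖modIP Y p q y‖ := by
      exact Complex.re_le_norm _
    have h2 := cs_sq y p q
    have h3 : ‖modIP Y p q y‖ ≤ Real.sqrt ((modIP Y p p y).re * (modIP Y q q y).re) := by
      have h4 := Real.sqrt_le_sqrt h2
      rwa [Real.sqrt_sq (norm_nonneg _)] at h4
    rw [← Real.sqrt_mul ha]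
    exact h1.trans h3
  have hqp : (modIP Y q p y).re = (modIP Y p q y).re := by
    simp [ip_conj q p, star_apply]
  have hexp := congrArg (fun f : C₀(Y, ℂ) => (f y).re) (ip_self_expand p q)
  simp only [ZeroAtInftyContinuousMap.add_apply, Complex.add_re] at hexp
  have hkey : (modIP Y (p + q) (p + q) y).re
      ≤ (Real.sqrt ((modIP Y p p y).re) + Real.sqrt ((modIP Y q q y).re)) ^ 2 := by
    nlinarith [Real.sq_sqrt ha, Real.sq_sqrt hd, hexp, hb, hqp]
  rw [rep_def, rep_def, rep_def]
  calc Real.sqrt ((modIP Y (p + q) (p + q) y).re)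
      ≤ Real.sqrt ((Real.sqrt ((modIP Y p p y).re) + Real.sqrt ((modIP Y q q y).re)) ^ 2) :=
        Real.sqrt_le_sqrt hkey
  _ = _ := Real.sqrt_sq (by positivity)

lemma rep_smul (y : Y) (c : ℂ) (p : P) :
    fibNormRep Y P y (c • p) = ‖c‖ * fibNormRep Y P y p := by
  have hre : (modIP Y (c • p) (c • p) y).re = Complex.normSq c * (modIP Y p p y).re := by
    rw [ip_csmul_right, ip_csmul_left, ZeroAtInftyContinuousMap.smul_apply, ZeroAtInftyContinuousMap.smul_apply, smul_eq_mul, smul_eq_mul,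
      ← mul_assoc]
    have h1 : c * star c = ((Complex.normSq c : ℝ) : ℂ) := by
      rw [Complex.star_def]; exact Complex.mul_conj c
    rw [h1, Complex.re_ofReal_mul]
  rw [rep_def, rep_def, hre, Real.sqrt_mul (Complex.normSq_nonneg c),
    Complex.norm_def]

lemma rep_zero (y : Y) : fibNormRep Y P y (0 : P) = 0 := by
  rw [rep_def, ip_zero_left]
  simp

/-! ### Quotient fiber lemmas -/

lemma ip_apply_zero_of_mem {y : Y} {x : P} (p : P) (hx : x ∈ fiberIdeal Y P y) :
    modIP Y p x y = 0 := by
  induction hx using Submodule.span_induction with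
  | mem z hz =>
    obtain ⟨f, q, hf, rfl⟩ := hz
    rw [ip_msmul_right, mul_apply, hf, mul_zero]
  | zero => rw [ip_zero_right]; simp
  | add u v hu hv ihu ihv => rw [ip_add_right, ZeroAtInftyContinuousMap.add_apply, ihu, ihv, add_zero]
  | smul c u hu ih => rw [ip_csmul_right, ZeroAtInftyContinuousMap.smul_apply, ih, smul_zero]

lemma ip_apply_zero_of_mem_left {y : Y} {x : P} (hx : x ∈ fiberIdeal Y P y) (p : P) :
    modIP Y x p y = 0 := by
  rw [ip_conj x p, star_apply, ip_apply_zero_of_mem p hx, star_zero]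

lemma ip_self_apply_congr {y : Y} {p q : P} (h : p - q ∈ fiberIdeal Y P y) :
    modIP Y p p y = modIP Y q q y := by
  have e : modIP Y p p - modIP Y q q = modIP Y p (p - q) + modIP Y (p - q) q := by
    rw [ip_sub_right, ip_sub_left]
    abel
  have e2 := congrArg (fun f : C₀(Y, ℂ) => f y) e
  simp only [ZeroAtInftyContinuousMap.sub_apply, ZeroAtInftyContinuousMap.add_apply] at e2
  rw [ip_apply_zero_of_mem p h, ip_apply_zero_of_mem_left h q, add_zero] at e2
  exact sub_eq_zero.mp e2

lemma rep_congr {y : Y} {p q : P} (h : fibMk Y P y p = fibMk Y P y q) :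
    fibNormRep Y P y p = fibNormRep Y P y q := by
  have hm : p - q ∈ fiberIdeal Y P y := (Submodule.Quotient.eq _).mp h
  rw [rep_def, rep_def, ip_self_apply_congr hm]

lemma fibNormQ_mk (y : Y) (p : P) :
    fibNormQ Y P y (fibMk Y P y p) = fibNormRep Y P y p := by
  have hset : {r | ∃ q : P, fibMk Y P y p = fibMk Y P y q ∧ r = fibNormRep Y P y q}
      = {fibNormRep Y P y p} := by
    ext r
    constructor
    · rintro ⟨q, hq, rfl⟩
      exact (rep_congr hq).symm
    · rintro hr
      exact ⟨p, rfl, hr⟩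
  show sInf _ = _
  rw [hset]
  exact csInf_singleton _

lemma fibMk_add (y : Y) (p q : P) :
    fibMk Y P y (p + q) = fibMk Y P y p + fibMk Y P y q :=
  Submodule.Quotient.mk_add _

lemma fibMk_sub (y : Y) (p q : P) :
    fibMk Y P y (p - q) = fibMk Y P y p - fibMk Y P y q :=
  Submodule.Quotient.mk_sub _

lemma fibMk_smul (y : Y) (c : ℂ) (p : P) :
    fibMk Y P y (c • p) = c • fibMk Y P y p :=
  Submodule.Quotient.mk_smul _ c p

lemma fibMk_zero (y : Y) : fibMk Y P y (0 : P) = 0 :=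
  Submodule.Quotient.mk_zero _

lemma fibMk_surj (y : Y) (u : Fib Y P y) : ∃ p : P, u = fibMk Y P y p := by
  obtain ⟨p, hp⟩ := Submodule.Quotient.mk_surjective _ u
  exact ⟨p, hp.symm⟩

lemma fibMk_sum {y : Y} {ι : Type} (s : Finset ι) (g : ι → P) :
    fibMk Y P y (∑ i ∈ s, g i) = ∑ i ∈ s, fibMk Y P y (g i) := by
  induction s using Finset.cons_induction with
  | empty => rw [Finset.sum_empty, Finset.sum_empty]; exact fibMk_zero y
  | cons a s ha ih => rw [Finset.sum_cons, Finset.sum_cons, fibMk_add, ih]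

lemma fibNormQ_nonneg (y : Y) (u : Fib Y P y) : 0 ≤ fibNormQ Y P y u := by
  obtain ⟨p, rfl⟩ := fibMk_surj y u
  rw [fibNormQ_mk]
  exact rep_nonneg y p

lemma fibNormQ_zero (y : Y) : fibNormQ Y P y (0 : Fib Y P y) = 0 := by
  rw [← fibMk_zero y, fibNormQ_mk]
  exact rep_zero y

lemma fibNormQ_add_le (y : Y) (u v : Fib Y P y) :
    fibNormQ Y P y (u + v) ≤ fibNormQ Y P y u + fibNormQ Y P y v := by
  obtain ⟨p, rfl⟩ := fibMk_surj y u
  obtain ⟨q, rfl⟩ := fibMk_surj y v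
  rw [← fibMk_add, fibNormQ_mk, fibNormQ_mk, fibNormQ_mk]
  exact rep_add_le y p q

lemma fibNormQ_smul (y : Y) (c : ℂ) (u : Fib Y P y) :
    fibNormQ Y P y (c • u) = ‖c‖ * fibNormQ Y P y u := by
  obtain ⟨p, rfl⟩ := fibMk_surj y u
  rw [← fibMk_smul, fibNormQ_mk, fibNormQ_mk]
  exact rep_smul y c p

lemma fibNormQ_neg (y : Y) (u : Fib Y P y) :
    fibNormQ Y P y (-u) = fibNormQ Y P y u := by
  have h := fibNormQ_smul y (-1 : ℂ) u
  simpa [neg_one_smul] using h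

lemma fibNormQ_sum_le {y : Y} {ι : Type} (s : Finset ι) (v : ι → Fib Y P y) :
    fibNormQ Y P y (∑ i ∈ s, v i) ≤ ∑ i ∈ s, fibNormQ Y P y (v i) := by
  induction s using Finset.cons_induction with
  | empty => simp [fibNormQ_zero]
  | cons a s ha ih =>
    rw [Finset.sum_cons, Finset.sum_cons]
    exact (fibNormQ_add_le y _ _).trans (add_le_add le_rfl ih)

lemma fibNormQ_mk_sub (y : Y) (p q : P) :
    fibNormQ Y P y (fibMk Y P y p - fibMk Y P y q) = fibNormRep Y P y (p - q) := by
  rw [← fibMk_sub, fibNormQ_mk]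

/-! ### Norm as sup over fibers -/

lemma norm_eq_iSup_rep (p : P) : ‖p‖ = ⨆ y, fibNormRep Y P y p := by
  rcases isEmpty_or_nonempty Y with hY | hY
  · rw [Real.iSup_of_isEmpty, norm_eq_ip (Y := Y) p,
      ZeroAtInftyContinuousMap.eq_of_empty (modIP Y p p) 0, norm_zero, Real.sqrt_zero]
  · rw [norm_eq_ip (Y := Y) p]
    have h1 : ‖modIP Y p p‖ = ⨆ y, (modIP Y p p y).re := by
      rw [← norm_toBCF_eq_norm, BoundedContinuousFunction.norm_eq_iSup_norm]
      have h2 : (fun y => ‖(modIP Y p p).toBCF y‖) = fun y => (modIP Y p p y).re :=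
        funext fun y => norm_ip_self_apply p y
      rw [h2]
    have hbdd : BddAbove (Set.range fun y => (modIP Y p p y).re) := by
      refine ⟨‖modIP Y p p‖, ?_⟩
      rintro r ⟨y, rfl⟩
      calc (modIP Y p p y).re = ‖modIP Y p p y‖ := (norm_ip_self_apply p y).symm
      _ ≤ ‖modIP Y p p‖ := cz_apply_norm_le _ y
    show Real.sqrt ‖modIP Y p p‖ = _
    rw [h1]
    exact Monotone.map_ciSup_of_continuousAt Real.continuous_sqrt.continuousAt
      (fun a b hab => Real.sqrt_le_sqrt hab) hbdd

/-! ### Composition constructions in `C₀` -/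

def czComp (φ : ℝ → ℝ) (hφ : Continuous φ) (h0 : φ 0 = 0) (a : C₀(Y, ℂ)) : C₀(Y, ℂ) where
  toFun y := ((φ ((a y).re) : ℝ) : ℂ)
  continuous_toFun :=
    Complex.continuous_ofReal.comp (hφ.comp (Complex.continuous_re.comp (map_continuous a)))
  zero_at_infty' := by
    have hc : Continuous fun z : ℂ => ((φ z.re : ℝ) : ℂ) :=
      Complex.continuous_ofReal.comp (hφ.comp Complex.continuous_re)
    have h1 : Filter.Tendsto (fun z : ℂ => ((φ z.re : ℝ) : ℂ)) (nhds 0) (nhds 0) := by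
      have h2 := hc.tendsto 0
      simpa [h0] using h2
    exact h1.comp a.zero_at_infty'

lemma czComp_apply (φ : ℝ → ℝ) (hφ : Continuous φ) (h0 : φ 0 = 0) (a : C₀(Y, ℂ)) (y : Y) :
    czComp φ hφ h0 a y = ((φ ((a y).re) : ℝ) : ℂ) := rfl

def czOfRealCc (φ : C(Y, ℝ)) (h : HasCompactSupport φ) : C₀(Y, ℂ) where
  toFun y := ((φ y : ℝ) : ℂ)
  continuous_toFun := Complex.continuous_ofReal.comp φ.continuous
  zero_at_infty' := by
    have hmem : (tsupport φ)ᶜ ∈ Filter.cocompact Y := by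
      rw [Filter.mem_cocompact]
      exact ⟨tsupport φ, h, subset_rfl⟩
    have hev : (fun y => ((φ y : ℝ) : ℂ)) =ᶠ[Filter.cocompact Y] fun _ => (0 : ℂ) := by
      filter_upwards [hmem] with y hy
      simp [image_eq_zero_of_notMem_tsupport hy]
    exact Filter.Tendsto.congr' hev.symm tendsto_const_nhds

lemma czOfRealCc_apply (φ : C(Y, ℝ)) (h : HasCompactSupport φ) (y : Y) :
    czOfRealCc φ h y = ((φ y : ℝ) : ℂ) := rfl

/-! ### Key real inequalities -/

lemma key1 {t εn εm : ℝ} (ht : 0 ≤ t) (hn : 0 < εn) (hm : 0 < εm) :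
    t * (Real.sqrt (Real.sqrt t) / (Real.sqrt t + εn)
      - Real.sqrt (Real.sqrt t) / (Real.sqrt t + εm)) ^ 2 ≤ (εn - εm) ^ 2 / εm := by
  set s := Real.sqrt t with hsdef
  set u := Real.sqrt s with hudef
  have hs0 : 0 ≤ s := Real.sqrt_nonneg t
  have hu0 : 0 ≤ u := Real.sqrt_nonneg s
  have hut : u ^ 2 = s := Real.sq_sqrt hs0
  have hst : s ^ 2 = t := Real.sq_sqrt ht
  have hA : 0 < s + εn := by linarith
  have hB : 0 < s + εm := by linarith
  have hdiff : u / (s + εn) - u / (s + εm) = u * (εm - εn) / ((s + εn) * (s + εm)) := by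
    field_simp
    ring
  rw [hdiff, div_pow, ← mul_div_assoc, div_le_div_iff₀ (by positivity) hm]
  have h1 : s ^ 2 ≤ (s + εn) ^ 2 := by nlinarith
  have h2 : s * εm ≤ (s + εm) ^ 2 := by nlinarith
  calc t * (u * (εm - εn)) ^ 2 * εm = s ^ 2 * (s * εm) * (εn - εm) ^ 2 := by
        rw [mul_pow, hut, ← hst]; ring
  _ ≤ (s + εn) ^ 2 * (s + εm) ^ 2 * (εn - εm) ^ 2 := by
        apply mul_le_mul_of_nonneg_right _ (sq_nonneg _)
        exact mul_le_mul h1 h2 (by positivity) (by positivity)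
  _ = (εn - εm) ^ 2 * ((s + εn) * (s + εm)) ^ 2 := by ring

lemma key2 {t ε : ℝ} (ht : 0 ≤ t) (hε : 0 < ε) :
    t * (Real.sqrt (Real.sqrt t) / (Real.sqrt t + ε) * Real.sqrt (Real.sqrt t) - 1) ^ 2
      ≤ ε ^ 2 := by
  set s := Real.sqrt t with hsdef
  set u := Real.sqrt s with hudef
  have hs0 : 0 ≤ s := Real.sqrt_nonneg t
  have hut : u ^ 2 = s := Real.sq_sqrt hs0
  have hst : s ^ 2 = t := Real.sq_sqrt ht
  have hB : 0 < s + ε := by linarith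
  have he1 : u / (s + ε) * u - 1 = -(ε / (s + ε)) := by
    have e0 : u / (s + ε) * u = s / (s + ε) := by
      rw [div_mul_eq_mul_div, ← sq, hut]
    rw [e0]
    rw [div_sub_one hB.ne']; ring
  rw [he1, neg_sq, div_pow, ← mul_div_assoc, div_le_iff₀ (by positivity)]
  have h1 : t ≤ (s + ε) ^ 2 := by nlinarith
  nlinarith [sq_nonneg ε, mul_le_mul_of_nonneg_right h1 (sq_nonneg ε)]

/-! ### Inner products of combinations -/

lemma ip_msmul_self (p : P) (f : C₀(Y, ℂ)) :
    modIP Y (modSMul Y p f) (modSMul Y p f) = star f * modIP Y p p * f := by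
  rw [ip_msmul_right, ip_msmul_left]

lemma ip_msmul_sub_self_apply (p : P) (h : C₀(Y, ℂ)) (y : Y) :
    modIP Y (modSMul Y p h - p) (modSMul Y p h - p) y
      = modIP Y p p y * ((star (h y) - 1) * (h y - 1)) := by
  rw [ip_sub_left, ip_sub_right, ip_sub_right, ip_msmul_self, ip_msmul_right, ip_msmul_left]
  simp only [ZeroAtInftyContinuousMap.sub_apply, mul_apply, star_apply]
  ring

lemma ip_msmul_self_apply_norm (p : P) (f : C₀(Y, ℂ)) (y : Y) :
    ‖modIP Y (modSMul Y p f) (modSMul Y p f) y‖ = (modIP Y p p y).re * ‖f y‖ ^ 2 := by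
  rw [ip_msmul_self, mul_apply, mul_apply, star_apply, norm_mul, norm_mul, norm_star,
    norm_ip_self_apply]
  ring

lemma norm_msmul_le (x : P) (f : C₀(Y, ℂ)) : ‖modSMul Y x f‖ ≤ ‖x‖ * ‖f‖ := by
  apply norm_le_of_ip_le (Y := Y) (by positivity)
  intro y
  rw [ip_msmul_self_apply_norm]
  have h1 : (modIP Y x x y).re ≤ ‖x‖ ^ 2 := by
    rw [← norm_ip_self_apply]
    exact (cz_apply_norm_le _ y).trans (norm_sq_eq x).ge
  have h2 : ‖f y‖ ^ 2 ≤ ‖f‖ ^ 2 := by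
    have := cz_apply_norm_le f y
    nlinarith [norm_nonneg (f y)]
  have h3 : 0 ≤ (modIP Y x x y).re := ip_self_re_nonneg x y
  calc (modIP Y x x y).re * ‖f y‖ ^ 2 ≤ ‖x‖ ^ 2 * ‖f‖ ^ 2 := by
        apply mul_le_mul h1 h2 (by positivity) (by positivity)
  _ = (‖x‖ * ‖f‖) ^ 2 := by ring

/-! ### Factorization `p = q · g` -/

lemma exists_factor [CompleteSpace P] (p : P) :
    ∃ (q : P) (g : C₀(Y, ℂ)), p = modSMul Y q g ∧ ∀ y : Y, modIP Y p p y = 0 → g y = 0 := by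
  classical
  set a : C₀(Y, ℂ) := modIP Y p p with ha
  have hre : ∀ y, 0 ≤ (a y).re := fun y => ip_self_re_nonneg p y
  have hφg : Continuous fun t : ℝ => Real.sqrt (Real.sqrt t) :=
    Real.continuous_sqrt.comp Real.continuous_sqrt
  have hφg0 : Real.sqrt (Real.sqrt 0) = 0 := by simp
  set g : C₀(Y, ℂ) := czComp _ hφg hφg0 a with hg
  set e : ℕ → ℝ := fun n => (2⁻¹ : ℝ) ^ n with he
  have hepos : ∀ n, 0 < e n := fun n => pow_pos (by norm_num) n
  have hφk : ∀ n : ℕ, Continuous fun t : ℝ =>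
      Real.sqrt (Real.sqrt t) / (Real.sqrt t + e n) := by
    intro n
    apply hφg.div (Real.continuous_sqrt.add continuous_const)
    intro t
    have h1 := Real.sqrt_nonneg t
    have h2 := hepos n
    exact (add_pos_of_nonneg_of_pos h1 h2).ne'
  have hφk0 : ∀ n : ℕ, Real.sqrt (Real.sqrt 0) / (Real.sqrt 0 + e n) = 0 := by
    intro n; simp
  set k : ℕ → C₀(Y, ℂ) := fun n => czComp _ (hφk n) (hφk0 n) a with hk
  set q : ℕ → P := fun n => modSMul Y p (k n) with hq
  -- `q n` is Cauchy
  have hqd : ∀ n : ℕ, dist (q n) (q (n + 1)) ≤ Real.sqrt 2⁻¹ * Real.sqrt 2⁻¹ ^ n := by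
    intro n
    rw [dist_eq_norm]
    have hsub : q n - q (n + 1) = modSMul Y p (k n - k (n + 1)) := (sm_sub_right _ _ _).symm
    rw [hsub]
    apply norm_le_of_ip_le (Y := Y) (by positivity)
    intro y
    rw [ip_msmul_self_apply_norm, ← ha]
    have h1 : (k n - k (n + 1)) y
        = ((Real.sqrt (Real.sqrt ((a y).re)) / (Real.sqrt ((a y).re) + e n)
          - Real.sqrt (Real.sqrt ((a y).re)) / (Real.sqrt ((a y).re) + e (n + 1)) : ℝ) : ℂ) := by
      rw [ZeroAtInftyContinuousMap.sub_apply, Complex.ofReal_sub]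
      rfl
    rw [h1, Complex.norm_real, Real.norm_eq_abs, sq_abs]
    have hkey := key1 (t := (a y).re) (hre y) (hepos n) (hepos (n + 1))
    have hee : (e n - e (n + 1)) ^ 2 / e (n + 1) = e (n + 1) := by
      have h2 : e n - e (n + 1) = e (n + 1) := by
        simp only [he, pow_succ]
        ring
      rw [h2, sq, mul_div_assoc, div_self (hepos (n + 1)).ne', mul_one]
    have hc2 : (Real.sqrt 2⁻¹ * Real.sqrt 2⁻¹ ^ n) ^ 2 = e (n + 1) := by
      have hh : Real.sqrt (2⁻¹ : ℝ) ^ 2 = 2⁻¹ := Real.sq_sqrt (by norm_num)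
      calc (Real.sqrt 2⁻¹ * Real.sqrt 2⁻¹ ^ n) ^ 2
          = Real.sqrt 2⁻¹ ^ 2 * (Real.sqrt 2⁻¹ ^ 2) ^ n := by ring
      _ = 2⁻¹ * 2⁻¹ ^ n := by rw [hh]
      _ = e (n + 1) := by simp only [he, pow_succ]; ring
    rw [hc2]
    exact hkey.trans_eq hee
  have hr1 : Real.sqrt (2⁻¹ : ℝ) < 1 := by
    rw [show (1 : ℝ) = Real.sqrt 1 from (Real.sqrt_one).symm]
    exact Real.sqrt_lt_sqrt (by norm_num) (by norm_num)
  have hcauchy : CauchySeq q := cauchySeq_of_le_geometric _ _ hr1 hqd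
  obtain ⟨qlim, hql⟩ := cauchySeq_tendsto_of_complete hcauchy
  have hng : ∀ n : ℕ, ‖modSMul Y (q n) g - p‖ ≤ e n := by
    intro n
    have hkg : modSMul Y (q n) g = modSMul Y p (k n * g) := sm_mul p (k n) g
    rw [hkg]
    apply norm_le_of_ip_le (Y := Y) (hepos n).le
    intro y
    rw [ip_msmul_sub_self_apply, ← ha]
    have h1 : (k n * g) y
        = ((Real.sqrt (Real.sqrt ((a y).re)) / (Real.sqrt ((a y).re) + e n)
          * Real.sqrt (Real.sqrt ((a y).re)) : ℝ) : ℂ) := by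
      rw [mul_apply, Complex.ofReal_mul]
      rfl
    have hstar : star ((k n * g) y) = (k n * g) y := by
      rw [h1]
      simp
    rw [hstar, h1, ← Complex.ofReal_one, ← Complex.ofReal_sub, ← Complex.ofReal_mul, norm_mul,
      Complex.norm_real, Real.norm_eq_abs]
    have hay : ‖a y‖ = (a y).re := by rw [ha]; exact norm_ip_self_apply p y
    rw [hay]
    have habs : |(Real.sqrt (Real.sqrt ((a y).re)) / (Real.sqrt ((a y).re) + e n)
          * Real.sqrt (Real.sqrt ((a y).re)) - 1)
        * (Real.sqrt (Real.sqrt ((a y).re)) / (Real.sqrt ((a y).re) + e n)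
          * Real.sqrt (Real.sqrt ((a y).re)) - 1)|
        = (Real.sqrt (Real.sqrt ((a y).re)) / (Real.sqrt ((a y).re) + e n)
          * Real.sqrt (Real.sqrt ((a y).re)) - 1) ^ 2 := by
      rw [abs_mul_self, ← pow_two]
    rw [habs]
    exact key2 (hre y) (hepos n)
  refine ⟨qlim, g, ?_, ?_⟩
  · have hlim1 : Filter.Tendsto (fun n => modSMul Y (q n) g) Filter.atTop
        (nhds (modSMul Y qlim g)) := by
      have hb : ∀ n, ‖modSMul Y (q n) g - modSMul Y qlim g‖ ≤ ‖q n - qlim‖ * ‖g‖ := by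
        intro n
        rw [← sm_sub_left]
        exact norm_msmul_le _ _
      have h0 : Filter.Tendsto (fun n => ‖q n - qlim‖ * ‖g‖) Filter.atTop (nhds 0) := by
        have h1 : Filter.Tendsto (fun n => ‖q n - qlim‖) Filter.atTop (nhds 0) := by
          have h2 : Filter.Tendsto (fun n => q n - qlim) Filter.atTop (nhds (qlim - qlim)) :=
            hql.sub tendsto_const_nhds
          rw [sub_self] at h2
          simpa using h2.norm
        have h3 := h1.mul_const ‖g‖
        simpa using h3
      rw [tendsto_iff_norm_sub_tendsto_zero]
      exact squeeze_zero (fun n => norm_nonneg _) hb h0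
    have hlim2 : Filter.Tendsto (fun n => modSMul Y (q n) g) Filter.atTop (nhds p) := by
      have h0 : Filter.Tendsto e Filter.atTop (nhds 0) :=
        tendsto_pow_atTop_nhds_zero_of_lt_one (by norm_num) (by norm_num)
      rw [tendsto_iff_norm_sub_tendsto_zero]
      exact squeeze_zero (fun n => norm_nonneg _) hng h0
    exact tendsto_nhds_unique hlim2 hlim1
  · intro y hy
    have h0 : (a y).re = 0 := by rw [ha, hy, Complex.zero_re]
    show ((Real.sqrt (Real.sqrt ((a y).re)) : ℝ) : ℂ) = 0
    rw [h0]
    simp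

lemma mem_fiberIdeal_of_ip_zero [CompleteSpace P] {y : Y} {p : P}
    (h : modIP Y p p y = 0) : p ∈ fiberIdeal Y P y := by
  obtain ⟨q, g, hfac, hgz⟩ := exists_factor (Y := Y) p
  rw [hfac]
  exact Submodule.subset_span ⟨g, q, hgz y h, rfl⟩

lemma fibMk_msmul [CompleteSpace P] (y : Y) (p : P) (f : C₀(Y, ℂ)) :
    fibMk Y P y (modSMul Y p f) = f y • fibMk Y P y p := by
  rw [← fibMk_smul]
  refine (Submodule.Quotient.eq _).mpr ?_
  obtain ⟨q, g, hfac, _⟩ := exists_factor (Y := Y) p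
  have hrw : modSMul Y p f - f y • p = modSMul Y q (g * f - f y • g) := by
    rw [sm_sub_right, ← sm_mul, ← hfac]
    have h2 : modSMul Y q (f y • g) = f y • modSMul Y q g := msmul_csmul_right (f y) q g
    rw [h2, ← hfac]
  rw [hrw]
  refine Submodule.subset_span ⟨g * f - f y • g, q, ?_, rfl⟩
  simp only [ZeroAtInftyContinuousMap.sub_apply, mul_apply, ZeroAtInftyContinuousMap.smul_apply, smul_eq_mul]
  ring

lemma fib_eq_zero_of_normQ [CompleteSpace P] {y : Y} {u : Fib Y P y}
    (h : fibNormQ Y P y u = 0) : u = 0 := by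
  obtain ⟨p, rfl⟩ := fibMk_surj y u
  rw [fibNormQ_mk] at h
  have hre0 : (modIP Y p p y).re = 0 :=
    le_antisymm (Real.sqrt_eq_zero'.mp h) (ip_self_re_nonneg p y)
  exact (Submodule.Quotient.mk_eq_zero _).mpr
    (mem_fiberIdeal_of_ip_zero (ip_self_eq_zero_of_re hre0))

/-! ### Approximation of continuous sections by `p̂` -/

lemma approx [T2Space Y] [LocallyCompactSpace Y] [CompleteSpace P]
    (F : (y : Y) → Fib Y P y) (hF : F ∈ C0SectionsP Y P) {ε : ℝ} (hε : 0 < ε) :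
    ∃ p : P, ∀ y, fibNormQ Y P y (F y - fibMk Y P y p) < ε := by
  classical
  obtain ⟨hFc, hF0⟩ := hF
  set ε' : ℝ := ε / 3 with hε'def
  have hε'0 : 0 < ε' := by positivity
  have hK' : (fun y => fibNormQ Y P y (F y)) ⁻¹' Set.Iio ε' ∈ Filter.cocompact Y :=
    hF0 (Iio_mem_nhds hε'0)
  rw [Filter.mem_cocompact] at hK'
  obtain ⟨K, hKc, hKsub⟩ := hK'
  have hselex : ∀ z : Y, ∃ pz : P, fibMk Y P z pz = F z := fun z =>
    Submodule.Quotient.mk_surjective _ (F z)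
  choose sel hsel using hselex
  set V : Y → Set Y := fun z =>
    {w : Y | fibNormQ Y P w (F w - fibMk Y P w (sel z)) < ε'} with hV
  have hVopen : ∀ z, IsOpen (V z) := by
    intro z
    have hbasic : IsOpen[topEP Y P] {ee : TotalP Y P | ee.1 ∈ (Set.univ : Set Y) ∧
        fibNormQ Y P ee.1 (ee.2 - fibMk Y P ee.1 (sel z)) < ε'} :=
      TopologicalSpace.isOpen_generateFrom_of_mem ⟨Set.univ, sel z, ε', isOpen_univ, hε'0, rfl⟩
    have heq : V z = (fun w => (⟨w, F w⟩ : TotalP Y P)) ⁻¹' {ee : TotalP Y P |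
        ee.1 ∈ (Set.univ : Set Y) ∧
        fibNormQ Y P ee.1 (ee.2 - fibMk Y P ee.1 (sel z)) < ε'} := by
      ext w
      simp [hV]
    rw [heq]
    exact @Continuous.isOpen_preimage Y (TotalP Y P) _ (topEP Y P) _ hFc _ hbasic
  have hVmem : ∀ z, z ∈ V z := by
    intro z
    show fibNormQ Y P z (F z - fibMk Y P z (sel z)) < ε'
    rw [hsel z, sub_self, fibNormQ_zero]
    exact hε'0
  obtain ⟨T, hT⟩ : ∃ T : Finset Y, K ⊆ ⋃ z ∈ T, V z :=
    hKc.elim_finite_subcover V hVopen fun w _ => Set.mem_iUnion.mpr ⟨w, hVmem w⟩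
  have hT' : K ⊆ ⋃ i : T, V ↑i := by
    intro w hw
    obtain ⟨z, hzT, hzw⟩ := Set.mem_iUnion₂.mp (hT hw)
    exact Set.mem_iUnion.mpr ⟨⟨z, hzT⟩, hzw⟩
  obtain ⟨f, hfsub, hfcs⟩ := PartitionOfUnity.exists_isSubordinate_of_locallyFinite_t2space
    hKc (fun i : T => V ↑i) (fun i => hVopen ↑i) (locallyFinite_of_finite _) hT'
  set ψ : T → C₀(Y, ℂ) := fun i => czOfRealCc (f i) (hfcs i) with hψ
  refine ⟨∑ i : T, modSMul Y (sel ↑i) (ψ i), ?_⟩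
  intro y
  set t : ℝ := ∑ i : T, f i y with ht
  have ht1 : t ≤ 1 := by
    have h1 := f.sum_le_one' y
    rwa [finsum_eq_sum_of_fintype] at h1
  have ht0 : 0 ≤ t := Finset.sum_nonneg fun i _ => f.nonneg i y
  have hmk : fibMk Y P y (∑ i : T, modSMul Y (sel ↑i) (ψ i))
      = ∑ i : T, ((f i y : ℝ) : ℂ) • fibMk Y P y (sel ↑i) := by
    rw [fibMk_sum]
    exact Finset.sum_congr rfl fun i _ => fibMk_msmul y (sel ↑i) (ψ i)
  have hsum : (∑ i : T, ((f i y : ℝ) : ℂ)) = ((t : ℝ) : ℂ) := by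
    rw [ht]
    push_cast
    rfl
  have hdec : F y - fibMk Y P y (∑ i : T, modSMul Y (sel ↑i) (ψ i))
      = ((1 - t : ℝ) : ℂ) • F y
        + ∑ i : T, ((f i y : ℝ) : ℂ) • (F y - fibMk Y P y (sel ↑i)) := by
    rw [hmk]
    simp only [smul_sub]
    rw [Finset.sum_sub_distrib, ← Finset.sum_smul, hsum]
    have h2 : ((1 - t : ℝ) : ℂ) • F y + (((t : ℝ) : ℂ) • F y
          - ∑ i : T, ((f i y : ℝ) : ℂ) • fibMk Y P y (sel ↑i))
        = (((1 - t : ℝ) : ℂ) + ((t : ℝ) : ℂ)) • F y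
          - ∑ i : T, ((f i y : ℝ) : ℂ) • fibMk Y P y (sel ↑i) := by
      rw [add_smul]
      abel
    rw [h2]
    have h3 : (((1 - t : ℝ) : ℂ) + ((t : ℝ) : ℂ)) = 1 := by
      push_cast
      ring
    rw [h3, one_smul]
  have hb1 : fibNormQ Y P y (((1 - t : ℝ) : ℂ) • F y) ≤ ε' := by
    rw [fibNormQ_smul]
    have hnorm : ‖((1 - t : ℝ) : ℂ)‖ = 1 - t := by
      rw [Complex.norm_real, Real.norm_eq_abs, abs_of_nonneg (by linarith)]
    by_cases hyK : y ∈ K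
    · have h1 := f.sum_eq_one' y hyK
      rw [finsum_eq_sum_of_fintype] at h1
      have h2 : t = 1 := by rw [ht]; exact h1
      rw [hnorm, h2, sub_self, zero_mul]
      exact hε'0.le
    · have hη : fibNormQ Y P y (F y) < ε' := hKsub hyK
      calc ‖((1 - t : ℝ) : ℂ)‖ * fibNormQ Y P y (F y) ≤ 1 * ε' := by
            apply mul_le_mul _ hη.le (fibNormQ_nonneg y _) zero_le_one
            rw [hnorm]
            linarith
      _ = ε' := one_mul _
  have hb2 : fibNormQ Y P y (∑ i : T, ((f i y : ℝ) : ℂ) • (F y - fibMk Y P y (sel ↑i))) ≤ ε' := by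
    calc fibNormQ Y P y (∑ i : T, ((f i y : ℝ) : ℂ) • (F y - fibMk Y P y (sel ↑i)))
        ≤ ∑ i : T, fibNormQ Y P y (((f i y : ℝ) : ℂ) • (F y - fibMk Y P y (sel ↑i))) :=
          fibNormQ_sum_le _ _
    _ ≤ ∑ i : T, f i y * ε' := by
        apply Finset.sum_le_sum
        intro i _
        rw [fibNormQ_smul]
        have hnn : ‖((f i y : ℝ) : ℂ)‖ = f i y := by
          rw [Complex.norm_real, Real.norm_eq_abs, abs_of_nonneg (f.nonneg i y)]
        rw [hnn]
        by_cases h0 : f i y = 0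
        · rw [h0, zero_mul, zero_mul]
        · have hyV : y ∈ V ↑i := hfsub i (subset_closure (Function.mem_support.mpr h0))
          have hlt : fibNormQ Y P y (F y - fibMk Y P y (sel ↑i)) < ε' := hyV
          exact mul_le_mul_of_nonneg_left hlt.le (f.nonneg i y)
    _ = t * ε' := by rw [ht, Finset.sum_mul]
    _ ≤ 1 * ε' := mul_le_mul_of_nonneg_right ht1 hε'0.le
    _ = ε' := one_mul _
  calc fibNormQ Y P y (F y - fibMk Y P y (∑ i : T, modSMul Y (sel ↑i) (ψ i)))
      = fibNormQ Y P y (((1 - t : ℝ) : ℂ) • F y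
        + ∑ i : T, ((f i y : ℝ) : ℂ) • (F y - fibMk Y P y (sel ↑i))) := by rw [hdec]
  _ ≤ fibNormQ Y P y (((1 - t : ℝ) : ℂ) • F y)
      + fibNormQ Y P y (∑ i : T, ((f i y : ℝ) : ℂ) • (F y - fibMk Y P y (sel ↑i))) :=
        fibNormQ_add_le y _ _
  _ ≤ ε' + ε' := add_le_add hb1 hb2
  _ < ε := by rw [hε'def]; linarith

end HatAux


/-- **Proposition 2.3 (second part).**  For a second countable Hilbert `C₀(Y)`-module
`P`, the map `p ↦ p̂`, `p̂(y) = p + I_yP`, is a unitary `C₀(Y)`-module isomorphism from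
`P` onto `C₀(Y, E_P)`: every continuous section of `E_P` vanishing at infinity is `p̂`
for a unique `p ∈ P`, the map is `C₀(Y)`-linear, and it preserves the inner product
(equivalently, it is fiberwise isometric and `‖p‖ = sup_y ‖p̂(y)‖`). -/
theorem hat_is_unitary_module_isomorphism
    (Y : Type) [TopologicalSpace Y] [T2Space Y] [LocallyCompactSpace Y]
    [SecondCountableTopology Y]
    (P : Type) [NormedAddCommGroup P] [NormedSpace ℂ P] [CompleteSpace P]
    [SecondCountableTopology P] [HilbertCzeroModule Y P] :
    -- p̂ is a continuous section vanishing at infinity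
    (∀ p : P, hatSec Y P p ∈ C0SectionsP Y P) ∧
    -- the map p ↦ p̂ is onto C₀(Y, E_P), with a unique preimage
    (∀ F ∈ C0SectionsP Y P, ∃! p : P, hatSec Y P p = F) ∧
    -- additivity and ℂ-linearity
    (∀ p q : P, ∀ y, hatSec Y P (p + q) y = hatSec Y P p y + hatSec Y P q y) ∧
    (∀ (c : ℂ) (p : P) (y : Y), hatSec Y P (c • p) y = c • hatSec Y P p y) ∧
    -- C₀(Y)-module map: (p·f)^(y) = f(y)·p̂(y)
    (∀ (p : P) (f : C₀(Y, ℂ)) (y : Y), hatSec Y P (modSMul Y p f) y = f y • hatSec Y P p y) ∧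
    -- unitarity: fiberwise isometric (hence inner-product preserving, by polarization)
    (∀ (p q : P) (y : Y),
      fibNormQ Y P y (hatSec Y P p y - hatSec Y P q y) = fibNormRep Y P y (p - q)) ∧
    -- isometric for the uniform norm
    (∀ p : P, ‖p‖ = ⨆ y, fibNormQ Y P y (hatSec Y P p y)) := by
  have hat_mem : ∀ p : P, hatSec Y P p ∈ C0SectionsP Y P := by
    intro p
    constructor
    · -- continuity of `y ↦ (y, p̂(y))`
      have hgoal : @Continuous Y (TotalP Y P) _
          (TopologicalSpace.generateFrom (basisP Y P))
          (fun y => (⟨y, fibMk Y P y p⟩ : TotalP Y P)) := by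
        refine continuous_generateFrom_iff.mpr ?_
        rintro S ⟨U, r, ε, hU, hε, rfl⟩
        have hrw : ∀ y : Y, fibNormQ Y P y (fibMk Y P y p - fibMk Y P y r)
            = fibNormRep Y P y (p - r) := fun y => fibNormQ_mk_sub y p r
        have heq : (fun y => (⟨y, fibMk Y P y p⟩ : TotalP Y P)) ⁻¹'
              {ee : TotalP Y P | ee.1 ∈ U ∧ fibNormQ Y P ee.1 (ee.2 - fibMk Y P ee.1 r) < ε}
            = U ∩ {y : Y | fibNormRep Y P y (p - r) < ε} := by
          ext y
          simp only [Set.mem_preimage, Set.mem_setOf_eq, Set.mem_inter_iff]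
          rw [hrw y]
        rw [heq]
        refine hU.inter ?_
        have hcont : Continuous fun y : Y => fibNormRep Y P y (p - r) :=
          Real.continuous_sqrt.comp (Complex.continuous_re.comp
            (map_continuous (modIP Y (p - r) (p - r))))
        exact isOpen_lt hcont continuous_const
      exact hgoal
    · -- vanishing at infinity
      have h1 := (modIP Y p p).zero_at_infty'
      have hc : Filter.Tendsto (fun z : ℂ => Real.sqrt z.re) (nhds 0) (nhds 0) := by
        have h2 := (Real.continuous_sqrt.comp Complex.continuous_re).tendsto (0 : ℂ)
        simpa only [Function.comp_def, Complex.zero_re, Real.sqrt_zero] using h2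
      have h3 := hc.comp h1
      have heq : (fun y => fibNormQ Y P y (hatSec Y P p y))
          = fun y => Real.sqrt ((modIP Y p p y).re) :=
        funext fun y => fibNormQ_mk y p
      rw [heq]
      exact h3
  have hat_inj : ∀ p p' : P, hatSec Y P p = hatSec Y P p' → p = p' := by
    intro p p' h
    have hz : modIP Y (p - p') (p - p') = 0 := by
      ext y
      rw [ZeroAtInftyContinuousMap.zero_apply]
      refine ip_apply_zero_of_mem _ ?_
      exact (Submodule.Quotient.eq _).mp (congrFun h y)
    have hn : ‖p - p'‖ = 0 := by
      rw [norm_eq_ip (Y := Y) (p - p'), hz, norm_zero, Real.sqrt_zero]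
    exact sub_eq_zero.mp (norm_eq_zero.mp hn)
  refine ⟨hat_mem, ?_, ?_, ?_, ?_, ?_, ?_⟩
  · -- surjectivity with uniqueness
    intro F hF
    have hseq : ∀ n : ℕ, ∃ p : P, ∀ y,
        fibNormQ Y P y (F y - fibMk Y P y p) < 1 / (n + 1) := by
      intro n
      exact approx F hF (by positivity)
    choose u hu using hseq
    have hdist : ∀ n m : ℕ, dist (u n) (u m) ≤ 1 / (n + 1) + 1 / (m + 1) := by
      intro n m
      rw [dist_eq_norm]
      apply norm_le_of_rep_le (Y := Y) (by positivity)
      intro y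
      rw [← fibNormQ_mk_sub]
      have h2 : fibMk Y P y (u n) - fibMk Y P y (u m)
          = -(F y - fibMk Y P y (u n)) + (F y - fibMk Y P y (u m)) := by abel
      rw [h2]
      refine (fibNormQ_add_le y _ _).trans (add_le_add ?_ (hu m y).le)
      rw [fibNormQ_neg]
      exact (hu n y).le
    have hcauchy : CauchySeq u := by
      apply cauchySeq_of_le_tendsto_0 (fun N : ℕ => 2 / (N + 1))
      · intro n m N hn hm
        have e1 : (1 : ℝ) / (n + 1) ≤ 1 / (N + 1) := by
          apply one_div_le_one_div_of_le (by positivity)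
          have := (Nat.cast_le (α := ℝ)).mpr hn
          linarith
        have e2 : (1 : ℝ) / (m + 1) ≤ 1 / (N + 1) := by
          apply one_div_le_one_div_of_le (by positivity)
          have := (Nat.cast_le (α := ℝ)).mpr hm
          linarith
        calc dist (u n) (u m) ≤ 1 / (n + 1) + 1 / (m + 1) := hdist n m
        _ ≤ 1 / (N + 1) + 1 / (N + 1) := add_le_add e1 e2
        _ = 2 / (N + 1) := by ring
      · have h1 := tendsto_one_div_add_atTop_nhds_zero_nat.const_mul (2 : ℝ)
        simpa [mul_one_div, div_eq_mul_inv] using h1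
    obtain ⟨p, hp⟩ := cauchySeq_tendsto_of_complete hcauchy
    have hFp : hatSec Y P p = F := by
      funext y
      have hb : ∀ n : ℕ, fibNormQ Y P y (F y - fibMk Y P y p)
          ≤ 1 / (n + 1) + ‖u n - p‖ := by
        intro n
        have hsplit : F y - fibMk Y P y p
            = (F y - fibMk Y P y (u n)) + (fibMk Y P y (u n) - fibMk Y P y p) := by abel
        rw [hsplit]
        refine (fibNormQ_add_le y _ _).trans (add_le_add (hu n y).le ?_)
        rw [fibNormQ_mk_sub]
        exact rep_le_norm y (u n - p)
      have htend : Filter.Tendsto (fun n : ℕ => 1 / ((n : ℝ) + 1) + ‖u n - p‖)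
          Filter.atTop (nhds 0) := by
        have h1 := tendsto_one_div_add_atTop_nhds_zero_nat (𝕜 := ℝ)
        have h2 : Filter.Tendsto (fun n => ‖u n - p‖) Filter.atTop (nhds 0) := by
          have h3 : Filter.Tendsto (fun n => u n - p) Filter.atTop (nhds (p - p)) :=
            hp.sub tendsto_const_nhds
          rw [sub_self] at h3
          simpa using h3.norm
        simpa using h1.add h2
      have hle : fibNormQ Y P y (F y - fibMk Y P y p) ≤ 0 :=
        ge_of_tendsto htend (Filter.Eventually.of_forall hb)
      have h0 : fibNormQ Y P y (F y - fibMk Y P y p) = 0 :=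
        le_antisymm hle (fibNormQ_nonneg y _)
      have h1 := fib_eq_zero_of_normQ h0
      exact (sub_eq_zero.mp h1).symm
    exact ⟨p, hFp, fun p' hp' => hat_inj p' p (hp'.trans hFp.symm)⟩
  · intro p q y
    exact fibMk_add y p q
  · intro c p y
    exact fibMk_smul y c p
  · intro p f y
    exact fibMk_msmul y p f
  · intro p q y
    exact fibNormQ_mk_sub y p q
  · intro p
    rw [norm_eq_iSup_rep (Y := Y) p]
    have heq : (fun y => fibNormQ Y P y (hatSec Y P p y)) = fun y => fibNormRep Y P y p :=
      funext fun y => fibNormQ_mk y p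
    rw [heq]


end Stabilization
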